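/- Assume T''(x₀) = 0. Then γ̃ is twice differentiable at x₀ and its Hessian matrix is D²γ̃(x₀) = (1/(2π))·[[2μ² + p, q],[q, 2μ² − p]], where μ² = |T'(x₀)|², p = Re(T'''(x₀)·conj(T'(x₀)))/μ² and q = Re(i·T'''(x₀)·conj(T'(x₀)))/μ². -/

import Mathlib

open Complex Filter Topology

/-- The Robin function `γ̃(x) = -(1/(2π))·log(1 - |T(x)|²) + (1/(2π))·log|T'(x)|`. -/
noncomputable def robin (T : ℂ → ℂ) (x : ℂ) : ℝ :=
  -(2 * Real.pi)⁻¹ * Real.log (1 - ‖T x‖ ^ 2)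
    + (2 * Real.pi)⁻¹ * Real.log (‖deriv T x‖)


lemma deriv_ne_zero_of_injOn {Ω : Set ℂ} (hΩo : IsOpen Ω) {x₀ : ℂ} (hx₀ : x₀ ∈ Ω)
    {T : ℂ → ℂ} (hT : AnalyticAt ℂ T x₀) (hinj : Set.InjOn T Ω) (hT0 : T x₀ = 0) :
    deriv T x₀ ≠ 0 := by
  intro ha
  by_cases hz : ∀ᶠ z in 𝓝 x₀, T z = 0
  · have h1 : ∀ᶠ z in 𝓝[≠] x₀, T z = 0 ∧ z ∈ Ω :=
      ((hz.and (hΩo.mem_nhds hx₀)).filter_mono nhdsWithin_le_nhds)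
    obtain ⟨z, ⟨hz0, hzΩ⟩, hzne⟩ := (h1.and eventually_mem_nhdsWithin).exists
    exact hzne (Set.mem_singleton_iff.mpr (hinj hzΩ hx₀ (by rw [hz0, hT0])))
  · obtain ⟨n, g, hg, hgne, hrep⟩ := hT.exists_eventuallyEq_pow_smul_nonzero_iff.mpr hz
    match n with
    | 0 => exact hgne (by simpa [hT0] using hrep.self_of_nhds.symm)
    | 1 =>
      have hd : HasDerivAt (fun z => (z - x₀) ^ 1 • g z) (g x₀) x₀ := by
        have h1 : HasDerivAt (fun z : ℂ => z - x₀) 1 x₀ := (hasDerivAt_id x₀).sub_const x₀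
        have h2 : HasDerivAt g (deriv g x₀) x₀ := hg.differentiableAt.hasDerivAt
        have := h1.mul h2
        simpa [Pi.mul_def] using this
      have hrep' : T =ᶠ[𝓝 x₀] fun z => (z - x₀) ^ 1 • g z := hrep
      have : deriv T x₀ = g x₀ := by rw [hrep'.deriv_eq]; exact hd.deriv
      exact hgne (by rw [← this, ha])
    | (m + 2) =>
      set b := g x₀ with hbdef
      have hb : b ≠ 0 := hgne
      set N : ℕ := m + 2 with hN
      set h : ℂ → ℂ :=
        fun z => Complex.exp (Complex.log (g z * b⁻¹) / N + Complex.log b / N) with hhdef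
      set ψ : ℂ → ℂ := fun z => (z - x₀) * h z with hψdef
      have hh0 : h x₀ = Complex.exp (Complex.log b / N) := by
        simp [hhdef, ← hbdef, mul_inv_cancel₀ hb, Complex.log_one]
      have hhne : h x₀ ≠ 0 := by rw [hh0]; exact Complex.exp_ne_zero _
      have hha : AnalyticAt ℂ h x₀ := by
        apply AnalyticAt.cexp
        apply AnalyticAt.add _ analyticAt_const
        apply AnalyticAt.div _ analyticAt_const (by exact_mod_cast (by omega : N ≠ 0))
        exact (hg.mul analyticAt_const).clog (by show g x₀ * b⁻¹ ∈ _; rw [← hbdef, mul_inv_cancel₀ hb]; exact Complex.one_mem_slitPlane)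
      have hψs : HasStrictDerivAt ψ (h x₀) x₀ := by
        have h1 : HasStrictDerivAt (fun z : ℂ => z - x₀) 1 x₀ := by
          simpa [Pi.sub_def] using (hasStrictDerivAt_id x₀).sub (hasStrictDerivAt_const x₀ x₀)
        have h2 : HasStrictDerivAt h (fderiv ℂ h x₀ 1) x₀ :=
          hha.hasStrictFDerivAt.hasStrictDerivAt
        have := h1.mul h2
        simpa [hψdef, Pi.mul_def] using this
      have hmap := hψs.map_nhds_eq hhne
      have hψ0 : ψ x₀ = 0 := by simp [hψdef]
      have hev : ∀ᶠ z in 𝓝 x₀, z ∈ Ω ∧ T z = (z - x₀) ^ N • g z ∧ g z ≠ 0 := by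
        filter_upwards [hΩo.mem_nhds hx₀, hrep, hg.continuousAt.eventually_ne hgne]
          with z p1 p2 p3
        exact ⟨p1, p2, p3⟩
      have himg : ψ '' {z | z ∈ Ω ∧ T z = (z - x₀) ^ N • g z ∧ g z ≠ 0} ∈ 𝓝 (ψ x₀) := by
        rw [← hmap]
        exact Filter.image_mem_map hev
      rw [hψ0] at himg
      obtain ⟨ε, hε, hball⟩ := Metric.mem_nhds_iff.mp himg
      set ζ : ℂ := Complex.exp (((2 * Real.pi / N : ℝ) : ℂ) * Complex.I) with hζdef
      have hζabs : ‖ζ‖ = 1 := Complex.norm_exp_ofReal_mul_I _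
      have hζpow : ζ ^ N = 1 := by
        rw [hζdef, ← Complex.exp_nat_mul]
        rw [show ((N : ℕ) : ℂ) * (((2 * Real.pi / N : ℝ) : ℂ) * Complex.I)
            = 2 * Real.pi * Complex.I by
          have hNC : ((N : ℕ) : ℂ) ≠ 0 := Nat.cast_ne_zero.mpr (by omega)
          push_cast at hNC ⊢
          field_simp]
        exact Complex.exp_two_pi_mul_I
      have hζne : ζ ≠ 1 := by
        intro hζ
        rw [hζdef, Complex.exp_eq_one_iff] at hζ
        obtain ⟨k, hk⟩ := hζ
        have him := congrArg Complex.im hk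
        simp [Complex.mul_I_im] at him
        have hπ := Real.pi_pos
        have hNpos : (0:ℝ) < (N:ℝ) := by positivity
        have hk' : (k : ℝ) = ((N : ℝ))⁻¹ := by
          field_simp at him ⊢
          nlinarith [him]
        have h0 : (0:ℝ) < ((N:ℝ))⁻¹ := by positivity
        have h1 : ((N:ℝ))⁻¹ < 1 := by
          rw [inv_lt_one_iff₀]
          right
          exact_mod_cast (by omega : 1 < N)
        rw [← hk'] at h0 h1
        have : (0 : ℤ) < k := by exact_mod_cast h0
        have : k < 1 := by exact_mod_cast h1
        omega
      set t : ℂ := ((ε / 2 : ℝ) : ℂ) with htdef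
      have ht0 : t ≠ 0 := by
        rw [htdef]
        exact_mod_cast (by positivity : (ε / 2 : ℝ) ≠ 0)
      have htabs : ‖t‖ = ε / 2 := by
        rw [htdef, Complex.norm_real, Real.norm_eq_abs, abs_of_pos (by positivity)]
      have ht : t ∈ Metric.ball (0 : ℂ) ε := by
        rw [Metric.mem_ball, dist_zero_right, htabs]
        linarith
      have htζ : t * ζ ∈ Metric.ball (0 : ℂ) ε := by
        rw [Metric.mem_ball, dist_zero_right, norm_mul, hζabs, htabs]
        rw [mul_one]
        linarith
      obtain ⟨z₁, hz₁, hψ₁⟩ := hball ht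
      obtain ⟨z₂, hz₂, hψ₂⟩ := hball htζ
      have key : ∀ z, z ∈ Ω ∧ T z = (z - x₀) ^ N • g z ∧ g z ≠ 0 → T z = ψ z ^ N := by
        rintro z ⟨-, h2, h3⟩
        have hgb : g z * b⁻¹ ≠ 0 := mul_ne_zero h3 (inv_ne_zero hb)
        have hNne : ((N : ℕ) : ℂ) ≠ 0 := by exact_mod_cast (by omega : N ≠ 0)
        have hpow : h z ^ N = g z := by
          rw [hhdef]
          rw [← Complex.exp_nat_mul]
          rw [show ((N : ℕ) : ℂ) * (Complex.log (g z * b⁻¹) / N + Complex.log b / N)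
              = Complex.log (g z * b⁻¹) + Complex.log b by field_simp]
          rw [Complex.exp_add, Complex.exp_log hgb, Complex.exp_log hb]
          field_simp
        rw [h2, smul_eq_mul, hψdef]
        simp only [mul_pow, hpow]
      have hT1 : T z₁ = t ^ N := by rw [key z₁ hz₁, hψ₁]
      have hT2' : T z₂ = t ^ N := by rw [key z₂ hz₂, hψ₂, mul_pow, hζpow, mul_one]
      have heq := hinj hz₁.1 hz₂.1 (hT1.trans hT2'.symm)
      rw [heq, hψ₂] at hψ₁
      exact hζne (mul_left_cancel₀ ht0 (hψ₁.trans (mul_one t).symm))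


noncomputable def phiCLM : ℂ →L[ℝ] ℂ →L[ℝ] ℝ :=
  ((ContinuousLinearMap.compL ℝ ℂ ℂ ℝ) ((2 * Real.pi)⁻¹ • Complex.reCLM)).comp
    (ContinuousLinearMap.mul ℝ ℂ)

lemma phiCLM_apply (c v : ℂ) : phiCLM c v = (2 * Real.pi)⁻¹ * (c * v).re := rfl

noncomputable def Afun (T : ℂ → ℂ) (x : ℂ) : ℂ :=
  (2 / (1 - Complex.normSq (T x)) : ℝ) • ((starRingEnd ℂ) (T x) * deriv T x)
    + deriv (deriv T) x / deriv T x

lemma robin_eq (T : ℂ → ℂ) : robin T = fun x =>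
    -(2 * Real.pi)⁻¹ * Real.log (1 - Complex.normSq (T x))
      + (2 * Real.pi)⁻¹ * 2⁻¹ * Real.log (Complex.normSq (deriv T x)) := by
  funext x
  unfold robin
  rw [Complex.sq_norm, Complex.norm_def, Real.log_sqrt (Complex.normSq_nonneg _)]
  ring

lemma normSq_comp_hasFDerivAt (f : ℂ → ℂ) (L : ℂ →L[ℝ] ℂ) (x : ℂ)
    (hf : HasFDerivAt f L x) :
    HasFDerivAt (fun y => Complex.normSq (f y))
      ((f x).re • (Complex.reCLM.comp L) + (f x).re • (Complex.reCLM.comp L)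
        + ((f x).im • (Complex.imCLM.comp L) + (f x).im • (Complex.imCLM.comp L))) x := by
  have hre : HasFDerivAt (fun y => (f y).re) (Complex.reCLM.comp L) x :=
    (Complex.reCLM.hasFDerivAt).comp x hf
  have him : HasFDerivAt (fun y => (f y).im) (Complex.imCLM.comp L) x :=
    (Complex.imCLM.hasFDerivAt).comp x hf
  have key := (hre.mul hre).add (him.mul him)
  exact key.congr_of_eventuallyEq
    (Filter.Eventually.of_forall fun y => (Complex.normSq_apply _))

lemma robin_hasFDerivAt (T : ℂ → ℂ) (x : ℂ)
    (h1 : DifferentiableAt ℂ T x) (h2 : DifferentiableAt ℂ (deriv T) x)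
    (hd : deriv T x ≠ 0) (hb : Complex.normSq (T x) < 1) :
    HasFDerivAt (robin T) (phiCLM (Afun T x)) x := by
  have e1 : HasFDerivAt T ((deriv T x) • (1 : ℂ →L[ℝ] ℂ)) x :=
    h1.hasDerivAt.complexToReal_fderiv
  have e2 : HasFDerivAt (deriv T) ((deriv (deriv T) x) • (1 : ℂ →L[ℝ] ℂ)) x :=
    h2.hasDerivAt.complexToReal_fderiv
  have hnsT := normSq_comp_hasFDerivAt T _ x e1
  have hnsD := normSq_comp_hasFDerivAt (deriv T) _ x e2
  have hne1 : 1 - Complex.normSq (T x) ≠ 0 := (sub_pos.mpr hb).ne'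
  have hne2 : Complex.normSq (deriv T x) ≠ 0 := (Complex.normSq_pos.mpr hd).ne'
  have hlog1 := (((hasFDerivAt_const (1:ℝ) x).sub hnsT).log hne1).const_mul (-(2*Real.pi)⁻¹)
  have hlog2 := ((hnsD.log hne2)).const_mul ((2*Real.pi)⁻¹ * 2⁻¹)
  have hsum := hlog1.add hlog2
  rw [robin_eq]
  refine hsum.congr_fderiv (Eq.symm ?_)
  refine ContinuousLinearMap.ext fun v => ?_
  simp only [phiCLM_apply, Afun, ContinuousLinearMap.add_apply,
    ContinuousLinearMap.coe_smul', Pi.smul_apply, ContinuousLinearMap.coe_comp',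
    Function.comp_apply, ContinuousLinearMap.smul_apply, ContinuousLinearMap.one_apply,
    ContinuousLinearMap.coe_sub', Pi.sub_apply, ContinuousLinearMap.zero_apply,
    Complex.reCLM_apply, Complex.imCLM_apply, hasFDerivAt_const,
    ContinuousLinearMap.coe_zero, Pi.zero_apply, smul_eq_mul]
  simp only [Complex.real_smul, Complex.add_re, Complex.add_im, Complex.mul_re,
    Complex.mul_im, Complex.div_re, Complex.div_im, Complex.ofReal_re, Complex.ofReal_im,
    Complex.conj_re, Complex.conj_im, Complex.sub_re, Complex.sub_im, Complex.zero_re,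
    Complex.zero_im]
  field_simp [Real.pi_ne_zero]
  ring

lemma Afun_hasFDerivAt (T : ℂ → ℂ) (x₀ : ℂ)
    (h1 : DifferentiableAt ℂ T x₀) (h2 : DifferentiableAt ℂ (deriv T) x₀)
    (h3 : DifferentiableAt ℂ (deriv (deriv T)) x₀)
    (hd : deriv T x₀ ≠ 0) (hT0 : T x₀ = 0) (hT2 : deriv (deriv T) x₀ = 0) :
    HasFDerivAt (Afun T)
      ((2 * Complex.normSq (deriv T x₀) : ℝ) • (Complex.conjCLE : ℂ →L[ℝ] ℂ)
        + (deriv (deriv (deriv T)) x₀ / deriv T x₀) • (ContinuousLinearMap.id ℝ ℂ)) x₀ := by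
  have e1 : HasFDerivAt T ((deriv T x₀) • (1 : ℂ →L[ℝ] ℂ)) x₀ :=
    h1.hasDerivAt.complexToReal_fderiv
  have e2 : HasFDerivAt (deriv T) ((deriv (deriv T) x₀) • (1 : ℂ →L[ℝ] ℂ)) x₀ :=
    h2.hasDerivAt.complexToReal_fderiv
  have econj : HasFDerivAt (fun x => (starRingEnd ℂ) (T x))
      ((Complex.conjCLE : ℂ →L[ℝ] ℂ).comp ((deriv T x₀) • (1 : ℂ →L[ℝ] ℂ))) x₀ := by
    have h := ((Complex.conjCLE : ℂ →L[ℝ] ℂ).hasFDerivAt (x := T x₀)).comp x₀ e1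
    exact h.congr_of_eventuallyEq (Filter.Eventually.of_forall fun y => rfl)
  have eprod := econj.mul' e2
  have hnsT := normSq_comp_hasFDerivAt T _ x₀ e1
  set u := Complex.normSq (T x₀) with hu
  have hune : (1 : ℝ) - u ≠ 0 := by rw [hu, hT0]; simp
  have houter : HasDerivAt (fun t : ℝ => 2 / (1 - t))
      (2 * (-(-1) / (1 - u) ^ 2)) u := by
    have hh := (((hasDerivAt_id u).const_sub 1).inv hune).const_mul (2:ℝ)
    simpa [div_eq_mul_inv] using hh
  have hscal : HasFDerivAt (fun x => (2 / (1 - Complex.normSq (T x)) : ℝ))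
      ((2 * (-(-1) / (1 - u) ^ 2)) • ((T x₀).re • (Complex.reCLM.comp ((deriv T x₀) • (1 : ℂ →L[ℝ] ℂ))) + (T x₀).re • (Complex.reCLM.comp ((deriv T x₀) • (1 : ℂ →L[ℝ] ℂ)))
        + ((T x₀).im • (Complex.imCLM.comp ((deriv T x₀) • (1 : ℂ →L[ℝ] ℂ))) + (T x₀).im • (Complex.imCLM.comp ((deriv T x₀) • (1 : ℂ →L[ℝ] ℂ)))))) x₀ :=
    houter.comp_hasFDerivAt (h₂ := fun t : ℝ => 2 / (1 - t)) x₀ hnsT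
  have hA1 := hscal.smul eprod
  have eA2 : HasFDerivAt (fun x => deriv (deriv T) x / deriv T x)
      (((deriv (deriv (deriv T)) x₀ * deriv T x₀
          - deriv (deriv T) x₀ * deriv (deriv T) x₀) / deriv T x₀ ^ 2)
        • (1 : ℂ →L[ℝ] ℂ)) x₀ :=
    (h3.hasDerivAt.div h2.hasDerivAt hd).complexToReal_fderiv
  have hfinal := hA1.add eA2
  have heq : (fun x => (2 / (1 - Complex.normSq (T x)) : ℝ))
      • ((fun x => (starRingEnd ℂ) (T x)) * deriv T) + (fun x => deriv (deriv T) x / deriv T x) = Afun T := by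
    funext x; rfl
  rw [heq] at hfinal
  refine hfinal.congr_fderiv (Eq.symm ?_)
  refine ContinuousLinearMap.ext fun v => ?_
  simp only [ContinuousLinearMap.add_apply, ContinuousLinearMap.coe_smul', Pi.smul_apply,
    ContinuousLinearMap.coe_comp', Function.comp_apply, ContinuousLinearMap.smul_apply,
    ContinuousLinearMap.one_apply, ContinuousLinearMap.coe_id', id_eq,
    ContinuousLinearMap.smulRight_apply, Complex.reCLM_apply, Complex.imCLM_apply,
    Complex.conjCLE_apply, hT0, hT2, map_zero, Complex.zero_re, Complex.zero_im,
    zero_smul, zero_mul, mul_zero, add_zero, zero_add, smul_zero, zero_div, zero_sub,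
    neg_zero, sub_zero, map_mul, smul_eq_mul]
  simp only [ContinuousLinearEquiv.coe_coe, Complex.conjCLE_apply, map_mul, op_smul_eq_mul,
    ContinuousLinearMap.zero_apply, zero_smul, mul_zero, add_zero]
  rw [Complex.real_smul, Complex.real_smul]
  push_cast
  rw [Complex.normSq_eq_conj_mul_self]
  field_simp



/-- if `T''(x₀) = 0` then the Robin function is twice differentiable at `x₀`
and its Hessian matrix (in the basis `(1, i)` of `ℂ` over `ℝ`) is
`(1/(2π))·[[2μ² + p, q],[q, 2μ² − p]]` with `μ² = |T'(x₀)|²`,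
`p = Re(T'''(x₀)·conj(T'(x₀)))/μ²`, `q = Re(i·T'''(x₀)·conj(T'(x₀)))/μ²`. -/
theorem stmt2
    (Ω : Set ℂ) (hΩo : IsOpen Ω) (hΩb : Bornology.IsBounded Ω)
    (hΩc : IsConnected Ω) (hΩsc : SimplyConnectedSpace Ω)
    (x₀ : ℂ) (hx₀ : x₀ ∈ Ω)
    (T : ℂ → ℂ) (hTd : DifferentiableOn ℂ T Ω)
    (hTbij : Set.BijOn T Ω (Metric.ball 0 1))
    (hT0 : T x₀ = 0)
    (hT2 : iteratedDeriv 2 T x₀ = 0) :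
    DifferentiableAt ℝ (fderiv ℝ (robin T)) x₀ ∧
    ∀ p q : ℝ,
      p = (iteratedDeriv 3 T x₀ * (starRingEnd ℂ) (deriv T x₀)).re
            / ‖deriv T x₀‖ ^ 2 →
      q = (Complex.I * iteratedDeriv 3 T x₀ * (starRingEnd ℂ) (deriv T x₀)).re
            / ‖deriv T x₀‖ ^ 2 →
      (Matrix.of fun i j : Fin 2 =>
          fderiv ℝ (fun x => fderiv ℝ (robin T) x (![1, Complex.I] j)) x₀ (![1, Complex.I] i))
        = (2 * Real.pi)⁻¹ •
            !![2 * ‖deriv T x₀‖ ^ 2 + p, q;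
               q, 2 * ‖deriv T x₀‖ ^ 2 - p] := by
  have hTan : AnalyticOnNhd ℂ T Ω := hTd.analyticOnNhd hΩo
  have hdTan : AnalyticOnNhd ℂ (deriv T) Ω := hTan.deriv
  have hddTan : AnalyticOnNhd ℂ (deriv (deriv T)) Ω := hdTan.deriv
  have h2eq : iteratedDeriv 2 T = deriv (deriv T) := by
    rw [show (2:ℕ) = 1 + 1 from rfl, iteratedDeriv_succ, iteratedDeriv_one]
  have h3eq : iteratedDeriv 3 T = deriv (deriv (deriv T)) := by
    rw [show (3:ℕ) = 2 + 1 from rfl, iteratedDeriv_succ, h2eq]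
  have hT2' : deriv (deriv T) x₀ = 0 := by rw [← h2eq]; exact hT2
  have ha : deriv T x₀ ≠ 0 :=
    deriv_ne_zero_of_injOn hΩo hx₀ (hTan x₀ hx₀) hTbij.injOn hT0
  have hns : Complex.normSq (deriv T x₀) ≠ 0 := (Complex.normSq_pos.mpr ha).ne'
  have hev : ∀ᶠ x in 𝓝 x₀, HasFDerivAt (robin T) (phiCLM (Afun T x)) x := by
    filter_upwards [hΩo.mem_nhds hx₀,
      ((hdTan x₀ hx₀).continuousAt).eventually_ne ha] with x hxΩ hxne
    refine robin_hasFDerivAt T x (hTan x hxΩ).differentiableAt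
      (hdTan x hxΩ).differentiableAt hxne ?_
    have hx1 : ‖T x‖ < 1 := by
      have := hTbij.mapsTo hxΩ
      simpa [Complex.dist_eq] using Metric.mem_ball.mp this
    nlinarith [Complex.sq_norm (T x), norm_nonneg (T x)]
  have hfd : fderiv ℝ (robin T) =ᶠ[𝓝 x₀] fun x => phiCLM (Afun T x) :=
    hev.mono fun x h => h.fderiv
  have hA' := Afun_hasFDerivAt T x₀ (hTan x₀ hx₀).differentiableAt
    (hdTan x₀ hx₀).differentiableAt (hddTan x₀ hx₀).differentiableAt ha hT0 hT2'
  constructor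
  · rw [Filter.EventuallyEq.differentiableAt_iff hfd]
    exact (phiCLM.differentiable.differentiableAt).comp x₀ hA'.differentiableAt
  · intro p q hp hq
    have hsecond : ∀ v w : ℂ,
        fderiv ℝ (fun x => fderiv ℝ (robin T) x v) x₀ w
          = (2*Real.pi)⁻¹ * (2 * Complex.normSq (deriv T x₀)
                * ((starRingEnd ℂ) w * v).re
              + ((deriv (deriv (deriv T)) x₀ * (starRingEnd ℂ) (deriv T x₀))
                  * (w * v)).re / Complex.normSq (deriv T x₀)) := by
      intro v w
      have h1 : (fun x => fderiv ℝ (robin T) x v)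
          =ᶠ[𝓝 x₀] fun x => (phiCLM.flip v) (Afun T x) := by
        filter_upwards [hfd] with x hx
        rw [hx]; rfl
      have h2 : HasFDerivAt (fun x => (phiCLM.flip v) (Afun T x))
          ((phiCLM.flip v).comp ((2 * Complex.normSq (deriv T x₀) : ℝ)
              • (Complex.conjCLE : ℂ →L[ℝ] ℂ)
            + (deriv (deriv (deriv T)) x₀ / deriv T x₀) • (ContinuousLinearMap.id ℝ ℂ))) x₀ :=
        (phiCLM.flip v).hasFDerivAt.comp x₀ hA'
      rw [h1.fderiv_eq, h2.fderiv]
      simp only [ContinuousLinearMap.coe_comp', Function.comp_apply,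
        ContinuousLinearMap.flip_apply, ContinuousLinearMap.add_apply,
        ContinuousLinearMap.coe_smul', Pi.smul_apply, ContinuousLinearMap.coe_id',
        id_eq, ContinuousLinearEquiv.coe_coe, Complex.conjCLE_apply, phiCLM_apply]
      have hinv : (deriv T x₀)⁻¹
          = (starRingEnd ℂ) (deriv T x₀) * (((Complex.normSq (deriv T x₀))⁻¹ : ℝ) : ℂ) :=
        Complex.inv_def _
      have expand : ((2 * Complex.normSq (deriv T x₀) : ℝ) • ((starRingEnd ℂ) w)
            + (deriv (deriv (deriv T)) x₀ / deriv T x₀) • w) * v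
          = ((2 * Complex.normSq (deriv T x₀) : ℝ) : ℂ) * ((starRingEnd ℂ) w * v)
            + (((Complex.normSq (deriv T x₀))⁻¹ : ℝ) : ℂ)
              * ((deriv (deriv (deriv T)) x₀ * (starRingEnd ℂ) (deriv T x₀)) * (w * v)) := by
        rw [Complex.real_smul, smul_eq_mul, div_eq_mul_inv, hinv]
        push_cast
        ring
      rw [expand, Complex.add_re, Complex.re_ofReal_mul, Complex.re_ofReal_mul]
      ring
    rw [hp, hq, h3eq]
    ext i j
    fin_cases i <;> fin_cases j <;>
      simp only [Matrix.of_apply, Matrix.cons_val', Matrix.cons_val_zero,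
        Matrix.cons_val_one, Matrix.head_cons, Matrix.empty_val',
        Matrix.cons_val_fin_one, Matrix.head_fin_const, Matrix.smul_apply,
        smul_eq_mul, Fin.isValue, Fin.zero_eta, Fin.mk_one] <;>
      rw [hsecond] <;>
      rw [Complex.sq_norm] <;>
      simp only [map_one, one_mul, mul_one, Complex.conj_I, Complex.mul_re,
        Complex.mul_im, Complex.I_re, Complex.I_im, Complex.neg_re, Complex.neg_im,
        Complex.conj_re, Complex.conj_im, Complex.one_re, Complex.one_im] <;>
      field_simp <;>
      ring
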